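/- Let H be a bounded positive definite self-adjoint operator on a Hilbert space, P an orthogonal projection with finite-dimensional range, P_⊥ = I − P, and define the block-diagonal part H_P via the form h_P(u,v) = (H^{1/2}Pu, H^{1/2}Pv) + (H^{1/2}P_⊥u, H^{1/2}P_⊥v). Then η_max(P) := sup_{u ≠ 0} |h[u] − h_P[u]|/h_P[u] < 1, where h[u] = ‖H^{1/2}u‖² and h_P[u] = ‖H^{1/2}Pu‖² + ‖H^{1/2}P_⊥u‖². -/

import Mathlib

local notation "⟪" x ", " y "⟫" => @inner ℝ _ _ x y

set_option maxHeartbeats 2000000 in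
/-- Fact (3.3): for a bounded positive definite self-adjoint operator `H` with square root
`S = H^{1/2}` and an orthogonal projection `P` with finite-dimensional range,
`η_max(P) = sup_{u≠0} |h[u] − h_P[u]| / h_P[u] < 1`, where `h[u] = ‖S u‖²` and
`h_P[u] = ‖S(Pu)‖² + ‖S(u − Pu)‖²`. -/
theorem eta_max_lt_one
    {H : Type*} [NormedAddCommGroup H] [InnerProductSpace ℝ H] [CompleteSpace H]
    (Hop S P : H →L[ℝ] H)
    (hHsa : IsSelfAdjoint Hop)
    (hHpos : ∃ c > (0:ℝ), ∀ u : H, c * ‖u‖ ^ 2 ≤ ⟪u, Hop u⟫)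
    (hS : IsSelfAdjoint S) (hSpos : ∀ u : H, 0 ≤ ⟪u, S u⟫) (hSsq : S ∘L S = Hop)
    (hP : IsSelfAdjoint P) (hPidem : P ∘L P = P)
    (hfin : FiniteDimensional ℝ (LinearMap.range (P : H →ₗ[ℝ] H))) :
    ∃ η : ℝ, η < 1 ∧
      ∀ u : H, u ≠ 0 →
        |‖S u‖ ^ 2 - (‖S (P u)‖ ^ 2 + ‖S (u - P u)‖ ^ 2)|
          ≤ η * (‖S (P u)‖ ^ 2 + ‖S (u - P u)‖ ^ 2) := by
  classical
  obtain ⟨c, hc, hcb⟩ := hHpos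
  have hSsym : ∀ x y : H, ⟪S x, y⟫ = ⟪x, S y⟫ := fun x y => hS.isSymmetric x y
  -- ‖S u‖² = ⟪u, Hop u⟫ ≥ c ‖u‖²
  have hSu_sq : ∀ u : H, ⟪u, Hop u⟫ = ‖S u‖ ^ 2 := by
    intro u
    rw [← hSsq]
    simp only [ContinuousLinearMap.comp_apply]
    rw [← hSsym u (S u), real_inner_self_eq_norm_sq]
  have hSlow : ∀ u : H, c * ‖u‖ ^ 2 ≤ ‖S u‖ ^ 2 := by
    intro u; rw [← hSu_sq]; exact hcb u
  -- S is injective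
  have hSinj : Function.Injective S := by
    intro x y hxy
    have h0 : S (x - y) = 0 := by rw [map_sub, hxy, sub_self]
    have h1 := hSlow (x - y)
    rw [h0, norm_zero] at h1
    have h2 : ‖x - y‖ = 0 := by
      by_contra hne
      have hpos : 0 < ‖x - y‖ := lt_of_le_of_ne (norm_nonneg _) (Ne.symm hne)
      nlinarith [mul_pos hc (mul_pos hpos hpos)]
    exact sub_eq_zero.mp (norm_eq_zero.mp h2)
  have hker : S.ker = ⊥ := LinearMap.ker_eq_bot.mpr hSinj
  -- S has closed range
  have hanti : AntilipschitzWith (Real.toNNReal (Real.sqrt c)⁻¹) S := by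
    apply AddMonoidHomClass.antilipschitz_of_bound
    intro x
    have hsc : 0 < Real.sqrt c := Real.sqrt_pos.mpr hc
    have h1 : Real.sqrt c * ‖x‖ ≤ ‖S x‖ := by
      have h2 : (Real.sqrt c * ‖x‖) ^ 2 ≤ ‖S x‖ ^ 2 := by
        have := hSlow x
        have : Real.sqrt c ^ 2 = c := Real.sq_sqrt hc.le
        nlinarith [hSlow x]
      nlinarith [norm_nonneg (S x), mul_nonneg hsc.le (norm_nonneg x)]
    rw [Real.coe_toNNReal _ (by positivity)]
    rw [le_inv_mul_iff₀ hsc]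
    linarith
  have hclosedrange : IsClosed (Set.range S) :=
    hanti.isClosed_range S.uniformContinuous
  have hclosedrange' : IsClosed ((S.range : Submodule ℝ H) : Set H) := by
    have : ((S.range : Submodule ℝ H) : Set H) = Set.range S := by
      ext x; simp [LinearMap.mem_range]
    rw [this]; exact hclosedrange
  haveI : CompleteSpace S.range := hclosedrange'.completeSpace_coe
  -- S is surjective
  have hrange : S.range = ⊤ := by
    rw [← Submodule.orthogonal_eq_bot_iff]
    rw [Submodule.eq_bot_iff]
    intro v hv
    have h1 : ⟪S (S v), v⟫ = 0 :=
      (Submodule.mem_orthogonal _ _).mp hv _ ⟨S v, rfl⟩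
    have h2 : ⟪v, Hop v⟫ = 0 := by
      rw [← hSsq]
      simp only [ContinuousLinearMap.comp_apply]
      rw [real_inner_comm]
      exact h1
    have h3 := hcb v
    rw [h2] at h3
    have h4 : ‖v‖ = 0 := by
      by_contra hne
      have hpos : 0 < ‖v‖ := lt_of_le_of_ne (norm_nonneg _) (Ne.symm hne)
      nlinarith [mul_pos hc (mul_pos hpos hpos)]
    exact norm_eq_zero.mp h4
  -- S as a continuous linear equivalence
  set e : H ≃L[ℝ] H := ContinuousLinearEquiv.ofBijective S hker hrange with he
  have hecoe : ⇑e = ⇑S := ContinuousLinearEquiv.coeFn_ofBijective S hker hrange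
  -- the subspaces M = S(ran P) and K = S(ker P)
  set M : Submodule ℝ H := Submodule.map (S : H →ₗ[ℝ] H) P.range with hM
  set K : Submodule ℝ H := Submodule.map (S : H →ₗ[ℝ] H) P.ker with hK
  haveI : FiniteDimensional ℝ M := Module.Finite.map _ _
  have hPP : ∀ u : H, P (P u) = P u := by
    intro u
    have := congrArg (fun T : H →L[ℝ] H => T u) hPidem
    simpa using this
  have hmemM : ∀ u : H, S (P u) ∈ M := fun u => ⟨P u, ⟨u, rfl⟩, rfl⟩
  have hmemK : ∀ u : H, S (u - P u) ∈ K := by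
    intro u
    refine ⟨u - P u, ?_, rfl⟩
    exact LinearMap.mem_ker.mpr (by simp [hPP])
  -- M ∩ K = 0
  have hMK : ∀ x : H, x ∈ M → x ∈ K → x = 0 := by
    intro x hxM hxK
    obtain ⟨a, ⟨w, hw⟩, ha⟩ := hxM
    obtain ⟨b, hb, hbx⟩ := hxK
    simp only [ContinuousLinearMap.coe_coe] at ha hbx hw
    have hab : a = b := hSinj (ha.trans hbx.symm)
    have hPb : P b = 0 := hb
    have ha0 : a = 0 := by
      have h1 : P a = a := by rw [← hw, hPP]
      rw [hab] at h1 ⊢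
      rw [← h1, hPb]
    rw [← ha, ha0, map_zero]
  -- K is closed
  have hKclosed : IsClosed (K : Set H) := by
    have himg : (K : Set H) = e '' (P.ker : Set H) := by
      ext x
      simp only [hK, Submodule.map_coe, Set.mem_image, hecoe, ContinuousLinearMap.coe_coe,
        SetLike.mem_coe]
    rw [himg]
    exact e.toHomeomorph.isClosedMap _ (ContinuousLinearMap.isClosed_ker P)
  haveI : CompleteSpace K := hKclosed.completeSpace_coe
  clear_value M K
  clear hM hK hecoe he
  -- Pythagoras for the orthogonal projection onto K
  have hpyth : ∀ v : H,
      ‖v‖ ^ 2 = ‖(K.orthogonalProjectionOnto v : H)‖ ^ 2 + ‖v - K.orthogonalProjectionOnto v‖ ^ 2 := by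
    intro v
    have horth : ⟪(K.orthogonalProjectionOnto v : H), v - K.orthogonalProjectionOnto v⟫ = 0 := by
      have h1 := Submodule.sub_starProjection_mem_orthogonal (K := K) v
      exact (Submodule.mem_orthogonal K _).mp h1 _ (K.orthogonalProjectionOnto v).2
    have : v = (K.orthogonalProjectionOnto v : H) + (v - K.orthogonalProjectionOnto v) := by abel
    calc ‖v‖ ^ 2 = ‖(K.orthogonalProjectionOnto v : H) + (v - K.orthogonalProjectionOnto v)‖ ^ 2 := by
          rw [← this]
      _ = _ := by rw [norm_add_sq_real, horth]; ring
  -- projection onto K has norm ≤ 1 pointwise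
  have hQle : ∀ v : H, ‖(K.orthogonalProjectionOnto v : H)‖ ≤ ‖v‖ := by
    intro v
    nlinarith [hpyth v, sq_nonneg ‖v - K.orthogonalProjectionOnto v‖,
      norm_nonneg (K.orthogonalProjectionOnto v : H), norm_nonneg v]
  -- inner products between M and K through the projection
  have hinnerQ : ∀ (a b : H), b ∈ K →
      ⟪a, b⟫ = ⟪(K.orthogonalProjectionOnto a : H), b⟫ := by
    intro a b hb
    have h1 := Submodule.sub_starProjection_mem_orthogonal (K := K) a
    have h2 : ⟪a - K.orthogonalProjectionOnto a, b⟫ = 0 :=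
      (Submodule.mem_orthogonal' K _).mp h1 b hb
    have : ⟪a, b⟫ - ⟪(K.orthogonalProjectionOnto a : H), b⟫ = 0 := by
      rw [← inner_sub_left]; exact h2
    linarith
  -- case split on whether M is trivial
  by_cases hMtriv : ∀ u : H, S (P u) = 0
  · refine ⟨1/2, by norm_num, ?_⟩
    intro u _
    have h1 : S u = S (u - P u) := by
      have : S u = S (P u) + S (u - P u) := by rw [← map_add]; congr 1; abel
      rw [this, hMtriv u, zero_add]
    rw [hMtriv u, h1]
    simp only [norm_zero]
    rw [ne_eq] at *
    have : |‖S (u - P u)‖ ^ 2 - ((0:ℝ) ^ 2 + ‖S (u - P u)‖ ^ 2)| = 0 := by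
      simp
    rw [this]
    positivity
  · push_neg at hMtriv
    obtain ⟨u₀, hu₀⟩ := hMtriv
    -- nonempty unit sphere in M
    have ha0 : S (P u₀) ∈ M := hmemM u₀
    set a₀ : M := ⟨S (P u₀), ha0⟩ with ha₀def
    have ha₀ne : a₀ ≠ 0 := by
      rw [ha₀def, ne_eq, Submodule.mk_eq_zero]
      exact hu₀
    have ha₀norm : ‖a₀‖ ≠ 0 := fun h => ha₀ne (norm_eq_zero.mp h)
    set x₀ : M := ‖a₀‖⁻¹ • a₀ with hx₀def
    have hx₀ : x₀ ∈ Metric.sphere (0 : M) 1 := by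
      simp only [Metric.mem_sphere, dist_zero_right, hx₀def, norm_smul, norm_inv, norm_norm]
      exact inv_mul_cancel₀ ha₀norm
    -- maximize the projection norm over the unit sphere of M
    have hcont : Continuous fun a : M => ‖(K.orthogonalProjectionOnto (a : H) : H)‖ :=
      Continuous.norm (Continuous.subtype_val
        ((K.orthogonalProjectionOnto).continuous.comp continuous_subtype_val))
    obtain ⟨z, hzsph, hzmax⟩ := (isCompact_sphere (0 : M) 1).exists_isMaxOn
      ⟨x₀, hx₀⟩ hcont.continuousOn
    set η : ℝ := ‖(K.orthogonalProjectionOnto (z : H) : H)‖ with hηdef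
    have hηnonneg : (0:ℝ) ≤ η := norm_nonneg _
    have hznorm : ‖(z : H)‖ = 1 := by
      simpa [Metric.mem_sphere, dist_zero_right] using hzsph
    -- η < 1
    have hηlt : η < 1 := by
      rcases lt_or_eq_of_le (le_of_le_of_eq (hQle (z : H)) hznorm) with h | h
      · exact h
      · exfalso
        have hpz := hpyth (z : H)
        rw [hznorm, h] at hpz
        have hz0 : ‖(z : H) - K.orthogonalProjectionOnto (z : H)‖ = 0 := by
          have h1 : ‖(z : H) - K.orthogonalProjectionOnto (z : H)‖ ^ 2 = 0 := by nlinarith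
          exact pow_eq_zero_iff (two_ne_zero) |>.mp h1
        have hzeq : (z : H) = (K.orthogonalProjectionOnto (z : H) : H) :=
          sub_eq_zero.mp (norm_eq_zero.mp hz0)
        have hzK : (z : H) ∈ K := by
          rw [hzeq]; exact (K.orthogonalProjectionOnto (z : H)).2
        have h0 := hMK (z : H) z.2 hzK
        rw [h0] at hznorm
        simp at hznorm
    -- scaling: for all a ∈ M, ‖Q a‖ ≤ η ‖a‖
    have hscale : ∀ a : M, ‖(K.orthogonalProjectionOnto (a : H) : H)‖ ≤ η * ‖(a : H)‖ := by
      intro a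
      by_cases ha : a = 0
      · simp [ha]
      · have hna : ‖a‖ ≠ 0 := fun h => ha (norm_eq_zero.mp h)
        have hmem : (‖a‖⁻¹ • a) ∈ Metric.sphere (0 : M) 1 := by
          simp only [Metric.mem_sphere, dist_zero_right, norm_smul, norm_inv, norm_norm]
          exact inv_mul_cancel₀ hna
        have := hzmax hmem
        simp only [Set.mem_setOf_eq] at this
        have hsm : (((‖a‖⁻¹ • a : M) : H)) = ‖a‖⁻¹ • (a : H) := rfl
        rw [hsm, map_smul] at this
        have hsm2 : ((‖a‖⁻¹ • K.orthogonalProjectionOnto (a : H) : K) : H)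
            = ‖a‖⁻¹ • (K.orthogonalProjectionOnto (a : H) : H) := rfl
        rw [hsm2, norm_smul, norm_inv, norm_norm] at this
        have hpos : (0:ℝ) < ‖a‖ := lt_of_le_of_ne (norm_nonneg a) (Ne.symm hna)
        have hcoe : ‖(a : H)‖ = ‖a‖ := rfl
        rw [hcoe]
        have h5 := mul_le_mul_of_nonneg_left this hpos.le
        rw [← mul_assoc, mul_inv_cancel₀ hna, one_mul] at h5
        linarith
    -- the key inner product bound
    have hbound : ∀ (a b : H), a ∈ M → b ∈ K → |⟪a, b⟫| ≤ η * ‖a‖ * ‖b‖ := by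
      intro a b haM hbK
      rw [hinnerQ a b hbK]
      calc |⟪(K.orthogonalProjectionOnto a : H), b⟫|
          ≤ ‖(K.orthogonalProjectionOnto a : H)‖ * ‖b‖ := abs_real_inner_le_norm _ _
        _ ≤ (η * ‖a‖) * ‖b‖ := by
            apply mul_le_mul_of_nonneg_right _ (norm_nonneg b)
            exact hscale ⟨a, haM⟩
        _ = η * ‖a‖ * ‖b‖ := by ring
    clear_value η
    clear hηdef
    refine ⟨η, hηlt, ?_⟩
    intro u _
    have key := hbound (S (P u)) (S (u - P u)) (hmemM u) (hmemK u)
    have hsplit : S u = S (P u) + S (u - P u) := by rw [← map_add]; congr 1; abel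
    have hdiff : ‖S u‖ ^ 2 - (‖S (P u)‖ ^ 2 + ‖S (u - P u)‖ ^ 2)
        = 2 * ⟪S (P u), S (u - P u)⟫ := by
      rw [hsplit, norm_add_sq_real]; ring
    rw [hdiff, abs_mul, abs_two]
    have t1 : (0:ℝ) ≤ |⟪S (P u), S (u - P u)⟫| := abs_nonneg _
    have t2 : (0:ℝ) ≤ η * (‖S (P u)‖ - ‖S (u - P u)‖) ^ 2 :=
      mul_nonneg hηnonneg (sq_nonneg _)
    nlinarith only [key, t1, t2]
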